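/- Random sampling welfare bound: Let v_1, …, v_n be nonnegative, weakly increasing SOS valuations with agents 1 and 2 achieving the largest and second largest values v_(1)(s) and v_(2)(s) at profile s. Partition [n] randomly into A and B where each agent independently goes to A with probability p. Allocate the item to argmax_{i ∈ B} w_i where w_i = v_i(s_A, s_i, 0_{B\{i\}}). Then the expected welfare of the allocated agent satisfies E[max_{i ∈ B} w_i] ≥ p(1-p)·v_(1)(s) + p²(1-p)·v_(2)(s), hence the approximation ratio is at least p(1-p)(1 + p·v_(2)(s)/v_(1)(s)). -/

import Mathlib

def SOS {n : ℕ} (v : (Fin n → NNReal) → ℝ) : Prop :=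
  ∀ (i : Fin n) (s s' : Fin n → NNReal) (t : NNReal), s ≤ s' → s' i = s i → s i ≤ t →
    v (Function.update s' i t) - v s' ≤ v (Function.update s i t) - v s

def zeroOutside {n : ℕ} (s : Fin n → NNReal) (i : Fin n) (A : Finset (Fin n)) :
    Fin n → NNReal :=
  fun j => if j = i ∨ j ∈ A then s j else 0

lemma key {α : Type*} [DecidableEq α] (p : ℝ) (hp0 : 0 ≤ p) (hp1 : p ≤ 1) :
    ∀ (T : Finset α) (f : Finset α → ℝ),
      (∀ (B C : Finset α) (j : α), B ⊆ C → j ∉ C →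
        f (insert j C) - f C ≤ f (insert j B) - f B) →
      (1 - p) * f ∅ + p * f T ≤
        ∑ A ∈ T.powerset, p ^ A.card * (1 - p) ^ (T.card - A.card) * f A := by
  intro T
  induction T using Finset.induction_on with
  | empty => intro f _; simp; ring_nf; rfl
  | @insert j T' hjT' ih =>
    intro f hsub
    rw [Finset.sum_powerset_insert hjT']
    have hcard : (insert j T').card = T'.card + 1 := Finset.card_insert_of_notMem hjT'
    have e1 : ∀ A ∈ T'.powerset,
        p ^ A.card * (1 - p) ^ ((insert j T').card - A.card) * f A
        = (1 - p) * (p ^ A.card * (1 - p) ^ (T'.card - A.card) * f A) := by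
      intro A hA
      have hle : A.card ≤ T'.card := Finset.card_le_card (Finset.mem_powerset.mp hA)
      rw [hcard]
      rw [show T'.card + 1 - A.card = (T'.card - A.card) + 1 by omega]
      ring
    have e2 : ∀ A ∈ T'.powerset,
        p ^ (insert j A).card * (1 - p) ^ ((insert j T').card - (insert j A).card) * f (insert j A)
        = p * (p ^ A.card * (1 - p) ^ (T'.card - A.card) * f (insert j A)) := by
      intro A hA
      have hA' := Finset.mem_powerset.mp hA
      have hjA : j ∉ A := fun h => hjT' (hA' h)
      have hle : A.card ≤ T'.card := Finset.card_le_card hA'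
      rw [hcard, Finset.card_insert_of_notMem hjA]
      rw [show T'.card + 1 - (A.card + 1) = T'.card - A.card by omega]
      ring
    rw [Finset.sum_congr rfl e1, Finset.sum_congr rfl e2, ← Finset.mul_sum, ← Finset.mul_sum]
    have h1 := ih f hsub
    have hsub' : ∀ (B C : Finset α) (j' : α), B ⊆ C → j' ∉ C →
        f (insert j (insert j' C)) - f (insert j C) ≤ f (insert j (insert j' B)) - f (insert j B) := by
      intro B C j' hBC hj'C
      rw [Finset.insert_comm j j' C, Finset.insert_comm j j' B]
      by_cases hjj : j' = j
      · subst hjj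
        rw [Finset.insert_idem, Finset.insert_idem]
        simp
      · have hnotin : j' ∉ insert j C := by
          simp [hjj, hj'C]
        exact hsub (insert j B) (insert j C) j' (Finset.insert_subset_insert j hBC) hnotin
    have h2 := ih (fun A => f (insert j A)) hsub'
    have hsubkey := hsub ∅ T' j (Finset.empty_subset _) hjT'
    have hp1' : 0 ≤ 1 - p := by linarith
    nlinarith [mul_le_mul_of_nonneg_left h1 hp1', mul_le_mul_of_nonneg_left h2 hp0,
      mul_le_mul_of_nonneg_left hsubkey (mul_nonneg hp0 hp1'), mul_nonneg hp0 hp1']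

lemma zeroOutside_mono {n : ℕ} (s : Fin n → NNReal) (i : Fin n) {A B : Finset (Fin n)}
    (h : A ⊆ B) : zeroOutside s i A ≤ zeroOutside s i B := by
  intro k
  unfold zeroOutside
  split_ifs with h1 h2
  · exact le_rfl
  · exact absurd (h1.imp id (fun hk => h hk)) h2
  · exact zero_le
  · exact le_rfl

lemma zeroOutside_insert {n : ℕ} (s : Fin n → NNReal) (i j : Fin n) (A : Finset (Fin n))
    (hj : j ≠ i) :
    zeroOutside s i (insert j A) = Function.update (zeroOutside s i A) j (s j) := by
  funext k
  by_cases hk : k = j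
  · subst hk
    simp [zeroOutside, Function.update]
  · simp [zeroOutside, Function.update, hk]

lemma f_submod {n : ℕ} (v : (Fin n → NNReal) → ℝ) (hsos : SOS v) (s : Fin n → NNReal)
    (i : Fin n) (B C : Finset (Fin n)) (j : Fin n) (hBC : B ⊆ C) (hjC : j ∉ C) :
    v (zeroOutside s i (insert j C)) - v (zeroOutside s i C) ≤
      v (zeroOutside s i (insert j B)) - v (zeroOutside s i B) := by
  by_cases hji : j = i
  · subst hji
    have e : ∀ D : Finset (Fin n), zeroOutside s j (insert j D) = zeroOutside s j D := by
      intro D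
      funext k
      simp only [zeroOutside, Finset.mem_insert]
      by_cases hk : k = j <;> simp [hk]
    rw [e, e]
    simp
  · rw [zeroOutside_insert s i j C hji, zeroOutside_insert s i j B hji]
    have hjB : j ∉ B := fun h => hjC (hBC h)
    have hzj : zeroOutside s i B j = 0 := by
      simp [zeroOutside, hji, hjB]
    have hzj' : zeroOutside s i C j = 0 := by
      simp [zeroOutside, hji, hjC]
    exact hsos j (zeroOutside s i B) (zeroOutside s i C) (s j)
      (zeroOutside_mono s i hBC) (by rw [hzj, hzj']) (by rw [hzj]; exact zero_le)

theorem stmt_10 {n : ℕ} (v : Fin n → (Fin n → NNReal) → ℝ)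
    (hnonneg : ∀ i s, 0 ≤ v i s) (hmono : ∀ i, Monotone (v i)) (hsos : ∀ i, SOS (v i))
    (s : Fin n → NNReal) (i1 i2 : Fin n) (hne : i1 ≠ i2)
    (h1 : ∀ j, v j s ≤ v i1 s) (h2 : ∀ j, j ≠ i1 → v j s ≤ v i2 s)
    (hpos : 0 < v i1 s)
    (p : ℝ) (hp0 : 0 ≤ p) (hp1 : p ≤ 1) :
    (∑ A ∈ (Finset.univ : Finset (Fin n)).powerset,
        p ^ A.card * (1 - p) ^ (n - A.card) *
          (if h : ((Finset.univ : Finset (Fin n)) \ A).Nonempty then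
            (Finset.univ \ A).sup' h (fun i => v i (zeroOutside s i A)) else 0) ≥
      p * (1 - p) * v i1 s + p ^ 2 * (1 - p) * v i2 s) ∧
    (∑ A ∈ (Finset.univ : Finset (Fin n)).powerset,
        p ^ A.card * (1 - p) ^ (n - A.card) *
          (if h : ((Finset.univ : Finset (Fin n)) \ A).Nonempty then
            (Finset.univ \ A).sup' h (fun i => v i (zeroOutside s i A)) else 0)) / v i1 s ≥
      p * (1 - p) * (1 + p * (v i2 s / v i1 s)) := by
  classical
  have hp1' : 0 ≤ 1 - p := by linarith
  have hn2 : 2 ≤ n := by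
    have h12 : (i1 : ℕ) ≠ (i2 : ℕ) := fun h => hne (Fin.ext h)
    have := i1.isLt
    have := i2.isLt
    omega
  set w : Finset (Fin n) → ℝ := fun A => p ^ A.card * (1 - p) ^ (n - A.card) with hw
  have hwnn : ∀ A, 0 ≤ w A := fun A => mul_nonneg (pow_nonneg hp0 _) (pow_nonneg hp1' _)
  set M : Finset (Fin n) → ℝ := fun A =>
    (if h : ((Finset.univ : Finset (Fin n)) \ A).Nonempty then
      (Finset.univ \ A).sup' h (fun i => v i (zeroOutside s i A)) else 0) with hM
  set f1 : Finset (Fin n) → ℝ := fun A => v i1 (zeroOutside s i1 A) with hf1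
  set f2 : Finset (Fin n) → ℝ := fun A => v i2 (zeroOutside s i2 A) with hf2
  set T1 : Finset (Fin n) := Finset.univ.erase i1 with hT1
  set T2 : Finset (Fin n) := (Finset.univ.erase i1).erase i2 with hT2
  have hcT1 : T1.card = n - 1 := by
    rw [hT1, Finset.card_erase_of_mem (Finset.mem_univ _)]
    simp
  have hcT2 : T2.card = n - 2 := by
    rw [hT2, Finset.card_erase_of_mem, Finset.card_erase_of_mem (Finset.mem_univ _)]
    · simp; omega
    · exact Finset.mem_erase.mpr ⟨hne.symm, Finset.mem_univ _⟩
  have hi1T2 : i1 ∉ T2 := by simp [hT2]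
  -- pointwise lower bound on M
  have hML : ∀ A ∈ (Finset.univ : Finset (Fin n)).powerset,
      w A * ((if i1 ∉ A then f1 A else 0) + (if i1 ∈ A ∧ i2 ∉ A then f2 A else 0))
        ≤ w A * M A := by
    intro A _
    refine mul_le_mul_of_nonneg_left ?_ (hwnn A)
    have hM0 : (0:ℝ) ≤ M A := by
      simp only [hM]
      split_ifs with h
      · obtain ⟨x, hx⟩ := h
        exact le_trans (hnonneg x _) (Finset.le_sup' (fun i => v i (zeroOutside s i A)) hx)
      · exact le_rfl
    have hMf : ∀ i : Fin n, i ∉ A → v i (zeroOutside s i A) ≤ M A := by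
      intro i hi
      have hmem : i ∈ Finset.univ \ A := Finset.mem_sdiff.mpr ⟨Finset.mem_univ _, hi⟩
      simp only [hM]
      rw [dif_pos ⟨i, hmem⟩]
      exact Finset.le_sup' (fun i => v i (zeroOutside s i A)) hmem
    by_cases h1A : i1 ∈ A
    · rw [if_neg (not_not_intro h1A)]
      by_cases h2A : i2 ∈ A
      · rw [if_neg (fun h => h.2 h2A), add_zero]
        exact hM0
      · rw [if_pos ⟨h1A, h2A⟩, zero_add]
        exact hMf i2 h2A
    · rw [if_pos h1A, if_neg (fun h => h1A h.1), add_zero]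
      exact hMf i1 h1A
  have hsplit : ∑ A ∈ (Finset.univ : Finset (Fin n)).powerset,
      w A * ((if i1 ∉ A then f1 A else 0) + (if i1 ∈ A ∧ i2 ∉ A then f2 A else 0))
      = (∑ A ∈ (Finset.univ : Finset (Fin n)).powerset, w A * (if i1 ∉ A then f1 A else 0))
        + (∑ A ∈ (Finset.univ : Finset (Fin n)).powerset,
            w A * (if i1 ∈ A ∧ i2 ∉ A then f2 A else 0)) := by
    rw [← Finset.sum_add_distrib]
    exact Finset.sum_congr rfl (fun A _ => by ring)
  -- Sum 1
  have hS1eq : (∑ A ∈ (Finset.univ : Finset (Fin n)).powerset, w A * (if i1 ∉ A then f1 A else 0))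
      = ∑ A ∈ T1.powerset, w A * f1 A := by
    rw [← Finset.sum_subset (Finset.powerset_mono.mpr (Finset.subset_univ T1))]
    · exact Finset.sum_congr rfl (fun A hA => by
        have hA' := Finset.mem_powerset.mp hA
        have : i1 ∉ A := fun h => (Finset.mem_erase.mp (hA' h)).1 rfl
        rw [if_pos this])
    · intro A hA hA'
      have : i1 ∈ A := by
        by_contra hi
        exact hA' (Finset.mem_powerset.mpr
          ((Finset.subset_erase).mpr ⟨Finset.subset_univ A, hi⟩))
      rw [if_neg (not_not_intro this), mul_zero]
  have hS1 : p * (1 - p) * v i1 s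
      ≤ ∑ A ∈ T1.powerset, w A * f1 A := by
    have e1 : ∀ A ∈ T1.powerset, w A * f1 A
        = (1 - p) * (p ^ A.card * (1 - p) ^ (T1.card - A.card) * f1 A) := by
      intro A hA
      have hle : A.card ≤ T1.card := Finset.card_le_card (Finset.mem_powerset.mp hA)
      rw [hw]
      simp only
      rw [show n - A.card = (T1.card - A.card) + 1 by omega]
      ring
    rw [Finset.sum_congr rfl e1, ← Finset.mul_sum]
    have hk := key p hp0 hp1 T1 f1 (fun B C j hBC hjC => f_submod (v i1) (hsos i1) s i1 B C j hBC hjC)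
    have hT1full : f1 T1 = v i1 s := by
      show v i1 (zeroOutside s i1 T1) = v i1 s
      congr 1
      funext k
      by_cases hk : k = i1 <;> simp [zeroOutside, hT1, Finset.mem_erase, hk]
    have hnn : 0 ≤ f1 ∅ := hnonneg i1 _
    rw [hT1full] at hk
    nlinarith [mul_le_mul_of_nonneg_left hk hp1',
      mul_nonneg (mul_nonneg hp1' hp1') hnn]
  -- Sum 2
  have hS2eq : (∑ A ∈ (Finset.univ : Finset (Fin n)).powerset,
        w A * (if i1 ∈ A ∧ i2 ∉ A then f2 A else 0))
      = ∑ A' ∈ T2.powerset, w (insert i1 A') * f2 (insert i1 A') := by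
    rw [show (∑ A ∈ (Finset.univ : Finset (Fin n)).powerset,
        w A * (if i1 ∈ A ∧ i2 ∉ A then f2 A else 0))
      = ∑ A ∈ (Finset.univ : Finset (Fin n)).powerset.filter (fun A => i1 ∈ A ∧ i2 ∉ A),
          w A * f2 A by
        rw [Finset.sum_filter]
        exact Finset.sum_congr rfl (fun A _ => by split_ifs <;> simp)]
    refine Finset.sum_bij' (fun A _ => A.erase i1) (fun A' _ => insert i1 A') ?_ ?_ ?_ ?_ ?_
    · intro A hA
      simp only [Finset.mem_filter, Finset.mem_powerset] at hA
      refine Finset.mem_powerset.mpr ?_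
      intro k hk
      obtain ⟨hk1, hkA⟩ := Finset.mem_erase.mp hk
      refine Finset.mem_erase.mpr ⟨fun h => hA.2.2 (h ▸ hkA), Finset.mem_erase.mpr ⟨hk1, Finset.mem_univ _⟩⟩
    · intro A' hA'
      have hA'' := Finset.mem_powerset.mp hA'
      simp only [Finset.mem_filter, Finset.mem_powerset]
      refine ⟨Finset.subset_univ _, Finset.mem_insert_self _ _, ?_⟩
      intro h
      rcases Finset.mem_insert.mp h with h | h
      · exact hne h.symm
      · exact (Finset.mem_erase.mp (hA'' h)).1 rfl
    · intro A hA
      simp only [Finset.mem_filter] at hA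
      exact Finset.insert_erase hA.2.1
    · intro A' hA'
      have hA'' := Finset.mem_powerset.mp hA'
      exact Finset.erase_insert (fun h => hi1T2 (hA'' h))
    · intro A hA
      simp only [Finset.mem_filter] at hA
      rw [Finset.insert_erase hA.2.1]
  have hS2 : p ^ 2 * (1 - p) * v i2 s
      ≤ ∑ A' ∈ T2.powerset, w (insert i1 A') * f2 (insert i1 A') := by
    have e2 : ∀ A' ∈ T2.powerset, w (insert i1 A') * f2 (insert i1 A')
        = (p * (1 - p)) * (p ^ A'.card * (1 - p) ^ (T2.card - A'.card) * f2 (insert i1 A')) := by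
      intro A' hA'
      have hA'' := Finset.mem_powerset.mp hA'
      have hle : A'.card ≤ T2.card := Finset.card_le_card hA''
      have hi1A' : i1 ∉ A' := fun h => hi1T2 (hA'' h)
      rw [hw]
      simp only
      rw [Finset.card_insert_of_notMem hi1A']
      rw [show n - (A'.card + 1) = (T2.card - A'.card) + 1 by omega]
      ring
    rw [Finset.sum_congr rfl e2, ← Finset.mul_sum]
    have hsub2 : ∀ (B C : Finset (Fin n)) (j : Fin n), B ⊆ C → j ∉ C →
        f2 (insert i1 (insert j C)) - f2 (insert i1 C)
          ≤ f2 (insert i1 (insert j B)) - f2 (insert i1 B) := by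
      intro B C j hBC hjC
      by_cases hji1 : j = i1
      · subst hji1
        rw [Finset.insert_idem, Finset.insert_idem]
        simp
      · rw [Finset.insert_comm i1 j C, Finset.insert_comm i1 j B]
        exact f_submod (v i2) (hsos i2) s i2 (insert i1 B) (insert i1 C) j
          (Finset.insert_subset_insert i1 hBC) (by simp [hji1, hjC])
    have hk := key p hp0 hp1 T2 (fun A' => f2 (insert i1 A')) hsub2
    have hT2full : f2 (insert i1 T2) = v i2 s := by
      show v i2 (zeroOutside s i2 (insert i1 T2)) = v i2 s
      congr 1
      funext k
      by_cases hk2 : k = i2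
      · simp [zeroOutside, hk2]
      · by_cases hk1 : k = i1
        · simp [zeroOutside, hk1]
        · simp [zeroOutside, hT2, Finset.mem_insert, Finset.mem_erase, hk1, hk2]
    have hnn : 0 ≤ f2 (insert i1 ∅) := hnonneg i2 _
    rw [hT2full] at hk
    nlinarith [mul_le_mul_of_nonneg_left hk (mul_nonneg hp0 hp1'),
      mul_nonneg (mul_nonneg (mul_nonneg hp0 hp1') hp1') hnn]
  -- combine
  have hmain : p * (1 - p) * v i1 s + p ^ 2 * (1 - p) * v i2 s
      ≤ ∑ A ∈ (Finset.univ : Finset (Fin n)).powerset, w A * M A := by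
    calc p * (1 - p) * v i1 s + p ^ 2 * (1 - p) * v i2 s
        ≤ (∑ A ∈ T1.powerset, w A * f1 A)
            + ∑ A' ∈ T2.powerset, w (insert i1 A') * f2 (insert i1 A') := by
          exact add_le_add hS1 hS2
      _ = ∑ A ∈ (Finset.univ : Finset (Fin n)).powerset,
            w A * ((if i1 ∉ A then f1 A else 0) + (if i1 ∈ A ∧ i2 ∉ A then f2 A else 0)) := by
          rw [hsplit, hS1eq, hS2eq]
      _ ≤ ∑ A ∈ (Finset.univ : Finset (Fin n)).powerset, w A * M A :=
          Finset.sum_le_sum hML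
  have hgoal1 : ∑ A ∈ (Finset.univ : Finset (Fin n)).powerset,
      p ^ A.card * (1 - p) ^ (n - A.card) *
        (if h : ((Finset.univ : Finset (Fin n)) \ A).Nonempty then
          (Finset.univ \ A).sup' h (fun i => v i (zeroOutside s i A)) else 0)
      ≥ p * (1 - p) * v i1 s + p ^ 2 * (1 - p) * v i2 s := hmain
  refine ⟨hgoal1, ?_⟩
  rw [ge_iff_le, le_div_iff₀ hpos]
  calc p * (1 - p) * (1 + p * (v i2 s / v i1 s)) * v i1 s
      = p * (1 - p) * v i1 s + p ^ 2 * (1 - p) * v i2 s := by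
        field_simp
    _ ≤ _ := hgoal1
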